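/- Let G be a connected weighted graph with incidence matrix B, positive weights 𝒜, Laplacian L = B𝒜Bᵀ of rank n−1, and pseudoinverse L†. For z ∈ ℂ^m with ‖z‖_∞ ≤ π/2 (entrywise modulus), the linear map Q_z : Img_ℂ(Bᵀ) → Img_ℂ(Bᵀ), Q_z x = 𝒫[sinc(z)]x, is invertible, and its inverse is given by Q_z⁻¹ =ic BᵀL†_{sinc(z)}B𝒜, where L_{sinc(z)} = B𝒜[sinc(z)]Bᵀ. -/

import Mathlib

open Matrix

/-- The complex sinc function: `sinc z = sin z / z` for `z ≠ 0` and `sinc 0 = 1`. -/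
noncomputable def csinc (z : ℂ) : ℂ := if z = 0 then 1 else Complex.sin z / z

private lemma aux_zero {n m : ℕ} (N : Matrix (Fin n) (Fin m) ℝ) (a : Fin m → ℝ)
    (ha : ∀ e, 0 < a e)
    (h : N * Matrix.diagonal a * N.transpose = 0) : N = 0 := by
  ext i e
  have hii := congrFun (congrFun h i) i
  rw [Matrix.mul_apply] at hii
  simp only [Matrix.mul_diagonal, Matrix.transpose_apply, Matrix.zero_apply] at hii
  have hnn : ∀ k ∈ Finset.univ, (0:ℝ) ≤ N i k * a k * N i k := by
    intro k _
    have : N i k * a k * N i k = a k * (N i k)^2 := by ring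
    rw [this]
    exact mul_nonneg (ha k).le (sq_nonneg _)
  have hall := (Finset.sum_eq_zero_iff_of_nonneg hnn).mp hii e (Finset.mem_univ e)
  have h5 : a e * (N i e)^2 = 0 := by
    rw [show a e * (N i e)^2 = N i e * a e * N i e from by ring, hall]
  have h6 : (N i e)^2 = 0 := (mul_eq_zero.mp h5).resolve_left (ha e).ne'
  simpa using (pow_eq_zero_iff two_ne_zero).mp h6

private lemma fix_aux {n m : ℕ} (B : Matrix (Fin n) (Fin m) ℝ) (a : Fin m → ℝ)
    (ha : ∀ e, 0 < a e) (X : Matrix (Fin n) (Fin n) ℝ) (hXt : Xᵀ = X)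
    (hXL : X * (B * Matrix.diagonal a * Bᵀ) = B * Matrix.diagonal a * Bᵀ) :
    X * B = B := by
  have hLt : (B * Matrix.diagonal a * Bᵀ)ᵀ = B * Matrix.diagonal a * Bᵀ := by
    rw [Matrix.transpose_mul, Matrix.transpose_mul, Matrix.transpose_transpose,
      Matrix.diagonal_transpose, Matrix.mul_assoc]
  have hLX : (B * Matrix.diagonal a * Bᵀ) * X = B * Matrix.diagonal a * Bᵀ := by
    have h := congrArg Matrix.transpose hXL
    rw [Matrix.transpose_mul, hXt, hLt] at h
    exact h
  have hXLr := hXL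
  have hLXr := hLX
  simp only [Matrix.mul_assoc] at hXLr hLXr
  have h0 : (B - X * B) * Matrix.diagonal a * (B - X * B)ᵀ = 0 := by
    have ht : (B - X*B)ᵀ = Bᵀ - Bᵀ * X := by
      rw [Matrix.transpose_sub, Matrix.transpose_mul, hXt]
    rw [ht]
    simp only [Matrix.sub_mul, Matrix.mul_sub, Matrix.mul_assoc]
    rw [hLXr, hXLr]
    simp
  have h := aux_zero (B - X * B) a ha h0
  rw [sub_eq_zero] at h
  exact h.symm

private lemma map_mul_ofReal {l p q : Type*} [Fintype p] (M : Matrix l p ℝ) (N : Matrix p q ℝ) :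
    (M * N).map Complex.ofReal = M.map Complex.ofReal * N.map Complex.ofReal := by
  ext i j
  simp only [Matrix.map_apply, Matrix.mul_apply]
  push_cast
  rfl

private lemma main_complex {n m : ℕ} (hn : 2 ≤ n)
    (Bc : Matrix (Fin n) (Fin m) ℂ) (A S : Matrix (Fin m) (Fin m) ℂ)
    (D : Matrix (Fin n) (Fin n) ℂ)
    (hBcH : Bcᴴ = Bcᵀ)
    (hsumC : ∀ e, ∑ i, Bc i e = 0)
    (hF1c : Bc * A * Bcᵀ * D * Bc = Bc)
    (hF2c : Bcᵀ * D * (Bc * A * Bcᵀ) = Bcᵀ)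
    (Lz : Matrix (Fin n) (Fin n) ℂ)
    (hLz : Lz = Bc * A * S * Bcᵀ)
    (hrank : Lz.rank = n - 1)
    (Lzdag : Matrix (Fin n) (Fin n) ℂ)
    (hLz1 : Lz * Lzdag * Lz = Lz)
    (hLz4 : (Lzdag * Lz)ᴴ = Lzdag * Lz) :
    Bcᵀ * Lzdag * Bc * A * (Bcᵀ * D * Bc * A * S) * Bcᵀ = Bcᵀ ∧
    Bcᵀ * D * Bc * A * S * (Bcᵀ * Lzdag * Bc * A) * Bcᵀ = Bcᵀ := by
  have hn0 : 0 < n := by omega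
  -- the all-ones vector
  set ones : Fin n → ℂ := fun _ => 1 with hones
  have hone_ne : ones ≠ 0 := by
    intro h
    have := congrFun h ⟨0, hn0⟩
    simp [hones] at this
  -- Bᵀ kills the ones vector
  have hBt1 : Bcᵀ.mulVec ones = 0 := by
    funext e
    have := hsumC e
    simpa [Matrix.mulVec, dotProduct, hones] using this
  have hLzone : Lz.mulVec ones = 0 := by
    rw [hLz, ← Matrix.mulVec_mulVec, hBt1, Matrix.mulVec_zero]
  -- kernel of Lz is the span of the ones vector
  have hrank' : Module.finrank ℂ (LinearMap.range Lz.mulVecLin) = n - 1 := hrank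
  have hkerLz : LinearMap.ker Lz.mulVecLin = Submodule.span ℂ {ones} := by
    have hle : Submodule.span ℂ {ones} ≤ LinearMap.ker Lz.mulVecLin := by
      rw [Submodule.span_singleton_le_iff_mem, LinearMap.mem_ker, Matrix.mulVecLin_apply]
      exact hLzone
    have hrn := LinearMap.finrank_range_add_finrank_ker Lz.mulVecLin
    rw [hrank', Module.finrank_fin_fun] at hrn
    have hk1 : Module.finrank ℂ (LinearMap.ker Lz.mulVecLin) = 1 := by omega
    exact (Submodule.eq_of_le_of_finrank_le hle
      (by rw [hk1, finrank_span_singleton hone_ne])).symm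
  -- range of Lz equals range of Bc
  have hle2 : LinearMap.range Lz.mulVecLin ≤ LinearMap.range Bc.mulVecLin := by
    have hfact : Lz = Bc * (A * (S * Bcᵀ)) := by rw [hLz]; simp only [Matrix.mul_assoc]
    rw [hfact, Matrix.mulVecLin_mul]
    exact LinearMap.range_comp_le_range _ _
  have hrangeEq : LinearMap.range Lz.mulVecLin = LinearMap.range Bc.mulVecLin := by
    let φ : (Fin n → ℂ) →ₗ[ℂ] ℂ :=
      { toFun := fun v => ∑ i, v i
        map_add' := fun u v => by simp [Finset.sum_add_distrib]
        map_smul' := fun c v => by simp [Finset.mul_sum] }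
    have hφtop : LinearMap.range φ = ⊤ := by
      rw [LinearMap.range_eq_top]
      intro c
      refine ⟨Pi.single ⟨0, hn0⟩ c, ?_⟩
      simp [φ, Pi.single_apply]
    have hkerφ : Module.finrank ℂ (LinearMap.ker φ) = n - 1 := by
      have hrn := LinearMap.finrank_range_add_finrank_ker φ
      rw [hφtop, finrank_top, Module.finrank_self, Module.finrank_fin_fun] at hrn
      omega
    have hsub : LinearMap.range Bc.mulVecLin ≤ LinearMap.ker φ := by
      rintro v ⟨u, rfl⟩
      simp only [LinearMap.mem_ker, Matrix.mulVecLin_apply]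
      show ∑ i, Bc.mulVec u i = 0
      simp only [Matrix.mulVec, dotProduct]
      rw [Finset.sum_comm]
      refine Finset.sum_eq_zero fun e _ => ?_
      rw [← Finset.sum_mul, hsumC e, zero_mul]
    have hfr : Module.finrank ℂ (LinearMap.range Bc.mulVecLin)
        ≤ Module.finrank ℂ (LinearMap.range Lz.mulVecLin) := by
      rw [hrank']
      exact (Submodule.finrank_mono hsub).trans (le_of_eq hkerφ)
    exact Submodule.eq_of_le_of_finrank_le hle2 hfr
  -- E2 : Lz * Lzdag * Bc = Bc
  have hE2 : Lz * Lzdag * Bc = Bc := by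
    ext i j
    have hmem : (fun k => Bc k j) ∈ LinearMap.range Bc.mulVecLin := by
      refine ⟨Pi.single j 1, ?_⟩
      funext k
      simp [Matrix.mulVecLin_apply, Matrix.mulVec, dotProduct, Pi.single_apply, mul_ite]
    rw [← hrangeEq] at hmem
    obtain ⟨w, hw⟩ := hmem
    rw [Matrix.mulVecLin_apply] at hw
    calc (Lz * Lzdag * Bc) i j
        = (Lz * Lzdag).mulVec (fun k => Bc k j) i := by
          simp [Matrix.mulVec, dotProduct, Matrix.mul_apply]
      _ = (Lz * Lzdag).mulVec (Lz.mulVec w) i := by rw [← hw]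
      _ = (Lz * Lzdag * Lz).mulVec w i := by rw [Matrix.mulVec_mulVec]
      _ = Lz.mulVec w i := by rw [hLz1]
      _ = Bc i j := congrFun hw i
  -- column sums of Lzdag * Lz vanish
  have hQ1 : (Lzdag * Lz).mulVec ones = 0 := by
    rw [← Matrix.mulVec_mulVec, hLzone, Matrix.mulVec_zero]
  have hQrow : ∀ k, ∑ i, (Lzdag * Lz) k i = 0 := by
    intro k
    have := congrFun hQ1 k
    simpa [Matrix.mulVec, dotProduct, hones] using this
  have hQcol : ∀ k, ∑ i, (Lzdag * Lz) i k = 0 := by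
    intro k
    have h1 : ∀ i, (Lzdag * Lz) i k = star ((Lzdag * Lz) k i) := by
      intro i
      conv_lhs => rw [← hLz4]
      simp [Matrix.conjTranspose_apply]
    calc ∑ i, (Lzdag * Lz) i k = ∑ i, star ((Lzdag * Lz) k i) :=
          Finset.sum_congr rfl fun i _ => h1 i
      _ = star (∑ i, (Lzdag * Lz) k i) := by rw [star_sum]
      _ = 0 := by rw [hQrow k, star_zero]
  -- E1 : Lzdag * Lz * Bc = Bc
  have hM0 : Lz * (Bc - Lzdag * Lz * Bc) = 0 := by
    rw [Matrix.mul_sub, ← Matrix.mul_assoc, ← Matrix.mul_assoc, hLz1, sub_self]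
  have hMcol : ∀ j, ∃ c : ℂ, ∀ i, (Bc - Lzdag * Lz * Bc) i j = c := by
    intro j
    have hmem : (fun i => (Bc - Lzdag * Lz * Bc) i j) ∈ LinearMap.ker Lz.mulVecLin := by
      rw [LinearMap.mem_ker, Matrix.mulVecLin_apply]
      have hcs : Lz.mulVec (fun i => (Bc - Lzdag * Lz * Bc) i j)
          = fun k => (Lz * (Bc - Lzdag * Lz * Bc)) k j := by
        funext k
        simp [Matrix.mulVec, dotProduct, Matrix.mul_apply]
      rw [hcs, hM0]
      rfl
    rw [hkerLz] at hmem
    rcases Submodule.mem_span_singleton.mp hmem with ⟨c, hc⟩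
    refine ⟨c, fun i => ?_⟩
    have := congrFun hc i
    simpa [hones] using this.symm
  have hMzero : Bc - Lzdag * Lz * Bc = 0 := by
    ext i j
    obtain ⟨c, hc⟩ := hMcol j
    have hsum0 : ∑ i', (Bc - Lzdag * Lz * Bc) i' j = 0 := by
      simp only [Matrix.sub_apply]
      rw [Finset.sum_sub_distrib]
      have h2 : ∑ i', (Lzdag * Lz * Bc) i' j = 0 := by
        have hexp : ∑ i', (Lzdag * Lz * Bc) i' j
            = ∑ i', ∑ k, (Lzdag * Lz) i' k * Bc k j :=
          Finset.sum_congr rfl fun i' _ => Matrix.mul_apply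
        rw [hexp, Finset.sum_comm]
        refine Finset.sum_eq_zero fun k _ => ?_
        rw [← Finset.sum_mul, hQcol k, zero_mul]
      rw [hsumC j, h2, sub_zero]
    have hcn : (n : ℂ) * c = 0 := by
      rw [← hsum0, Finset.sum_congr rfl fun i' _ => hc i']
      simp [Finset.sum_const, Finset.card_univ, mul_comm]
    have hc0 : c = 0 := by
      have hne : (n : ℂ) ≠ 0 := Nat.cast_ne_zero.mpr (by omega)
      rcases mul_eq_zero.mp hcn with h | h
      · exact absurd h hne
      · exact h
    simpa using (hc i).trans hc0
  have hE1m : Lzdag * Lz * Bc = Bc := by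
    rw [sub_eq_zero] at hMzero
    exact hMzero.symm
  have hE1 : Bcᵀ * (Lzdag * Lz) = Bcᵀ := by
    have h := congrArg Matrix.conjTranspose hE1m
    rw [Matrix.conjTranspose_mul, hLz4, hBcH] at h
    exact h
  -- key suffix identities
  have hA2 : Bc * (A * (Bcᵀ * (D * (Bc * (A * (S * Bcᵀ)))))) = Lz := by
    simp only [← Matrix.mul_assoc]
    rw [hF1c, ← hLz]
  have hA3 : Bc * (A * (S * (Bcᵀ * (Lzdag * (Bc * (A * Bcᵀ)))))) = Bc * (A * Bcᵀ) := by
    have h : Bc * A * S * Bcᵀ * Lzdag * Bc * A * Bcᵀ = Bc * A * Bcᵀ := by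
      rw [← hLz, hE2]
    simpa only [Matrix.mul_assoc] using h
  have hF2cr : Bcᵀ * (D * (Bc * (A * Bcᵀ))) = Bcᵀ := by
    simpa only [Matrix.mul_assoc] using hF2c
  have hE1r : Bcᵀ * (Lzdag * Lz) = Bcᵀ := hE1
  constructor
  · simp only [Matrix.mul_assoc]
    rw [hA2, hE1r]
  · simp only [Matrix.mul_assoc]
    rw [hA3, hF2cr]

theorem Qz_invertible
    (n m : ℕ) (B : Matrix (Fin n) (Fin m) ℝ) (a : Fin m → ℝ)
    (ha : ∀ e, 0 < a e)
    (hB : ∀ e : Fin m, ∃ i j : Fin n, i ≠ j ∧ B i e = 1 ∧ B j e = -1 ∧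
      ∀ k, k ≠ i → k ≠ j → B k e = 0)
    (hconn : ∀ v : Fin n → ℝ, B.transpose.mulVec v = 0 → ∃ c, ∀ i, v i = c)
    -- L† : Moore–Penrose pseudoinverse of the Laplacian L = B𝒜Bᵀ
    (Ldag : Matrix (Fin n) (Fin n) ℝ)
    (hL1 : (B * Matrix.diagonal a * B.transpose) * Ldag * (B * Matrix.diagonal a * B.transpose)
            = B * Matrix.diagonal a * B.transpose)
    (hL2 : Ldag * (B * Matrix.diagonal a * B.transpose) * Ldag = Ldag)
    (hL3 : ((B * Matrix.diagonal a * B.transpose) * Ldag).transpose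
            = (B * Matrix.diagonal a * B.transpose) * Ldag)
    (hL4 : (Ldag * (B * Matrix.diagonal a * B.transpose)).transpose
            = Ldag * (B * Matrix.diagonal a * B.transpose))
    (z : Fin m → ℂ) (hz : ∀ e, ‖z e‖ ≤ Real.pi / 2)
    -- L_{sinc(z)} = B𝒜[sinc(z)]Bᵀ (complexified)
    (Lz : Matrix (Fin n) (Fin n) ℂ)
    (hLz : Lz = (B.map Complex.ofReal) * Matrix.diagonal (fun e => (a e : ℂ)) *
      Matrix.diagonal (fun e => csinc (z e)) * (B.map Complex.ofReal).transpose)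
    -- rank result: rank(L_{sinc(z)}) = n − 1
    (hrank : Lz.rank = n - 1)
    -- L†_{sinc(z)} : Moore–Penrose pseudoinverse of L_{sinc(z)}
    (Lzdag : Matrix (Fin n) (Fin n) ℂ)
    (hLz1 : Lz * Lzdag * Lz = Lz) (hLz2 : Lzdag * Lz * Lzdag = Lzdag)
    (hLz3 : (Lz * Lzdag).conjTranspose = Lz * Lzdag)
    (hLz4 : (Lzdag * Lz).conjTranspose = Lzdag * Lz) :
    -- Q_z is invertible on Img_ℂ(Bᵀ) with inverse Bᵀ L†_{sinc(z)} B 𝒜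
    ∀ x : Fin m → ℂ, (∃ y : Fin n → ℂ, x = (B.map Complex.ofReal).transpose.mulVec y) →
      ((B.map Complex.ofReal).transpose * Lzdag * (B.map Complex.ofReal) *
          Matrix.diagonal (fun e => (a e : ℂ))).mulVec
        (((B.map Complex.ofReal).transpose * Ldag.map Complex.ofReal *
            (B.map Complex.ofReal) * Matrix.diagonal (fun e => (a e : ℂ)) *
            Matrix.diagonal (fun e => csinc (z e))).mulVec x) = x ∧
      ((B.map Complex.ofReal).transpose * Ldag.map Complex.ofReal *
          (B.map Complex.ofReal) * Matrix.diagonal (fun e => (a e : ℂ)) *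
          Matrix.diagonal (fun e => csinc (z e))).mulVec
        (((B.map Complex.ofReal).transpose * Lzdag * (B.map Complex.ofReal) *
            Matrix.diagonal (fun e => (a e : ℂ))).mulVec x) = x := by
  intro x hx
  obtain ⟨y, rfl⟩ := hx
  rcases Nat.eq_zero_or_pos m with hm | hm
  · constructor <;> · funext e; exact absurd e.isLt (by omega)
  obtain ⟨i0, j0, hij, -, -, -⟩ := hB ⟨0, hm⟩
  have hn : 2 ≤ n := by
    have h1 := i0.isLt; have h2 := j0.isLt
    have h3 : (i0 : ℕ) ≠ (j0 : ℕ) := Fin.val_ne_of_ne hij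
    omega
  -- real identities
  have hF1 : B * Matrix.diagonal a * Bᵀ * Ldag * B = B :=
    fix_aux B a ha ((B * Matrix.diagonal a * Bᵀ) * Ldag) hL3 hL1
  have hLsym : (B * Matrix.diagonal a * Bᵀ)ᵀ = B * Matrix.diagonal a * Bᵀ := by
    rw [Matrix.transpose_mul, Matrix.transpose_mul, Matrix.transpose_transpose,
      Matrix.diagonal_transpose, Matrix.mul_assoc]
  have hLQ : (B * Matrix.diagonal a * Bᵀ) * (Ldag * (B * Matrix.diagonal a * Bᵀ))
      = B * Matrix.diagonal a * Bᵀ := by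
    rw [← Matrix.mul_assoc]
    exact hL1
  have hQL : (Ldag * (B * Matrix.diagonal a * Bᵀ)) * (B * Matrix.diagonal a * Bᵀ)
      = B * Matrix.diagonal a * Bᵀ := by
    have h := congrArg Matrix.transpose hLQ
    rw [Matrix.transpose_mul, hL4, hLsym] at h
    exact h
  have hF2pre : (Ldag * (B * Matrix.diagonal a * Bᵀ)) * B = B :=
    fix_aux B a ha (Ldag * (B * Matrix.diagonal a * Bᵀ)) hL4 hQL
  have hF2 : Bᵀ * Ldag * (B * Matrix.diagonal a * Bᵀ) = Bᵀ := by
    have h := congrArg Matrix.transpose hF2pre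
    rw [Matrix.transpose_mul, hL4, ← Matrix.mul_assoc] at h
    exact h
  -- complexification
  have hmapd : (Matrix.diagonal a).map Complex.ofReal
      = Matrix.diagonal (fun e => (a e : ℂ)) := by
    rw [Matrix.diagonal_map Complex.ofReal_zero]
  have hF1c : (B.map Complex.ofReal) * Matrix.diagonal (fun e => (a e : ℂ)) *
      (B.map Complex.ofReal)ᵀ * (Ldag.map Complex.ofReal) * (B.map Complex.ofReal)
      = B.map Complex.ofReal := by
    have h : (B * Matrix.diagonal a * Bᵀ * Ldag * B).map Complex.ofReal
        = B.map Complex.ofReal := by rw [hF1]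
    rw [map_mul_ofReal, map_mul_ofReal, map_mul_ofReal, map_mul_ofReal,
      Matrix.transpose_map, hmapd] at h
    exact h
  have hF2c : (B.map Complex.ofReal)ᵀ * (Ldag.map Complex.ofReal) *
      ((B.map Complex.ofReal) * Matrix.diagonal (fun e => (a e : ℂ)) *
        (B.map Complex.ofReal)ᵀ) = (B.map Complex.ofReal)ᵀ := by
    have h : (Bᵀ * Ldag * (B * Matrix.diagonal a * Bᵀ)).map Complex.ofReal
        = Bᵀ.map Complex.ofReal := by rw [hF2]
    rw [map_mul_ofReal, map_mul_ofReal, map_mul_ofReal, map_mul_ofReal,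
      Matrix.transpose_map, hmapd] at h
    exact h
  -- conjugate transpose of a real matrix
  have hBcH : (B.map Complex.ofReal)ᴴ = (B.map Complex.ofReal)ᵀ := by
    ext i j
    simp [Matrix.conjTranspose_apply, Matrix.map_apply, Complex.conj_ofReal]
  -- column sums vanish
  have hsumR : ∀ e, ∑ k, B k e = 0 := by
    intro e
    obtain ⟨i, j, hij', h1, h2, h0⟩ := hB e
    have hss : ∑ k ∈ ({i, j} : Finset (Fin n)), B k e = ∑ k, B k e := by
      refine Finset.sum_subset (Finset.subset_univ _) fun k _ hk => ?_
      simp only [Finset.mem_insert, Finset.mem_singleton, not_or] at hk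
      exact h0 k hk.1 hk.2
    rw [← hss, Finset.sum_pair hij', h1, h2]
    ring
  have hsumC : ∀ e, ∑ i, (B.map Complex.ofReal) i e = 0 := by
    intro e
    calc ∑ i, (B.map Complex.ofReal) i e = ((∑ i, B i e : ℝ) : ℂ) := by
          rw [Complex.ofReal_sum]; rfl
      _ = 0 := by rw [hsumR e, Complex.ofReal_zero]
  have key := main_complex hn (B.map Complex.ofReal)
    (Matrix.diagonal (fun e => (a e : ℂ))) (Matrix.diagonal (fun e => csinc (z e)))
    (Ldag.map Complex.ofReal) hBcH hsumC hF1c hF2c Lz hLz hrank Lzdag hLz1 hLz4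
  constructor
  · rw [Matrix.mulVec_mulVec, Matrix.mulVec_mulVec, key.1]
  · rw [Matrix.mulVec_mulVec, Matrix.mulVec_mulVec, key.2]
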